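/- Let H be the group with presentation ⟨a, b, c | a^{2^n} = 1, b^{2^m} = a^{2^m}, c^{2^ℓ} = 1, [b,a] = c, [c,a] = c^{-2}, [c,b] = c^{-2}⟩ with n > m > ℓ ≥ 2. Then the centralizer C_H([H,H]) is abelian, equals ⟨a², ab, b², c⟩, and has exponent 2^{n-1}. -/

import Mathlib

open FreeGroup in
/-- Relators of H = G_⚁ = ⟨a,b,c | a^{2^n}=1, b^{2^m}=a^{2^m}, c^{2^ℓ}=1, [b,a]=c,
[c,a]=c⁻², [c,b]=c⁻²⟩, with convention [b,a] = b⁻¹a⁻¹ba. Generators 0 ↦ a, 1 ↦ b, 2 ↦ c. -/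
def relsH2 (n m ℓ : ℕ) : Set (FreeGroup (Fin 3)) :=
  { (of 0) ^ (2 ^ n), (of 1) ^ (2 ^ m) * ((of 0) ^ (2 ^ m))⁻¹, (of 2) ^ (2 ^ ℓ),
    (of 1)⁻¹ * (of 0)⁻¹ * of 1 * of 0 * (of 2)⁻¹,
    (of 2)⁻¹ * (of 0)⁻¹ * of 2 * of 0 * (of 2) ^ 2,
    (of 2)⁻¹ * (of 1)⁻¹ * of 2 * of 1 * (of 2) ^ 2 }

/-- The group G_⚁(n,m,ℓ). -/
abbrev H2 (n m ℓ : ℕ) := PresentedGroup (relsH2 n m ℓ)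

namespace Stmt4Aux
open Subgroup

variable {n m ℓ : ℕ}

local notation "𝕒" => (PresentedGroup.of (rels := relsH2 n m ℓ) 0)
local notation "𝕓" => (PresentedGroup.of (rels := relsH2 n m ℓ) 1)
local notation "𝕔" => (PresentedGroup.of (rels := relsH2 n m ℓ) 2)

lemma rel_mem {r : FreeGroup (Fin 3)} (h : r ∈ relsH2 n m ℓ) :
    PresentedGroup.mk (relsH2 n m ℓ) r = 1 :=
  (QuotientGroup.eq_one_iff _).2 (Subgroup.subset_normalClosure h)

lemma r1 : 𝕒 ^ (2^n) = 1 := by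
  have := rel_mem (n := n) (m := m) (ℓ := ℓ) (r := (FreeGroup.of 0)^(2^n)) (by left; rfl)
  simpa [PresentedGroup.of] using this

lemma r2 : 𝕓 ^ (2^m) = 𝕒 ^ (2^m) := by
  have := rel_mem (n := n) (m := m) (ℓ := ℓ)
    (r := (FreeGroup.of 1)^(2^m) * ((FreeGroup.of 0)^(2^m))⁻¹) (by right; left; rfl)
  simp only [map_mul, map_pow, map_inv] at this
  rw [mul_inv_eq_one] at this
  exact this

lemma r3 : 𝕔 ^ (2^ℓ) = 1 := by
  have := rel_mem (n := n) (m := m) (ℓ := ℓ) (r := (FreeGroup.of 2)^(2^ℓ))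
    (by right; right; left; rfl)
  simpa [PresentedGroup.of] using this

lemma r4 : 𝕓⁻¹ * 𝕒⁻¹ * 𝕓 * 𝕒 = 𝕔 := by
  have := rel_mem (n := n) (m := m) (ℓ := ℓ)
    (r := (FreeGroup.of 1)⁻¹ * (FreeGroup.of 0)⁻¹ * FreeGroup.of 1 * FreeGroup.of 0 * (FreeGroup.of 2)⁻¹)
    (by right; right; right; left; rfl)
  simp only [map_mul, map_inv] at this
  rw [mul_inv_eq_one] at this
  exact this

lemma r5 : 𝕔⁻¹ * 𝕒⁻¹ * 𝕔 * 𝕒 * 𝕔^2 = 1 := by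
  have := rel_mem (n := n) (m := m) (ℓ := ℓ)
    (r := (FreeGroup.of 2)⁻¹ * (FreeGroup.of 0)⁻¹ * FreeGroup.of 2 * FreeGroup.of 0 * (FreeGroup.of 2)^2)
    (by right; right; right; right; left; rfl)
  simpa [PresentedGroup.of] using this

lemma r6 : 𝕔⁻¹ * 𝕓⁻¹ * 𝕔 * 𝕓 * 𝕔^2 = 1 := by
  have := rel_mem (n := n) (m := m) (ℓ := ℓ)
    (r := (FreeGroup.of 2)⁻¹ * (FreeGroup.of 1)⁻¹ * FreeGroup.of 2 * FreeGroup.of 1 * (FreeGroup.of 2)^2)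
    (by right; right; right; right; right; rfl)
  simpa [PresentedGroup.of] using this

end Stmt4Aux

namespace Stmt4Aux
open Subgroup
variable {n m ℓ : ℕ}
local notation "𝕒" => (PresentedGroup.of (rels := relsH2 n m ℓ) 0)
local notation "𝕓" => (PresentedGroup.of (rels := relsH2 n m ℓ) 1)
local notation "𝕔" => (PresentedGroup.of (rels := relsH2 n m ℓ) 2)

section helpers
variable {G : Type*} [Group G]
lemma conj_flip {x c d : G} (h : x⁻¹ * c * x = d) : x⁻¹⁻¹ * d * x⁻¹ = c := by
  rw [← h]; group
lemma conjMul {x y c d e : G} (hx : x⁻¹ * c * x = d) (hy : y⁻¹ * d * y = e) :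
    (x*y)⁻¹ * c * (x*y) = e := by rw [← hy, ← hx]; group
lemma conjInv {y c d : G} (h : y⁻¹ * c * y = d) : y⁻¹ * c⁻¹ * y = d⁻¹ := by
  rw [← h]; group
lemma comm_of_conj {x y : G} (h : y⁻¹ * x * y = x) : x * y = y * x := by
  calc x*y = y*(y⁻¹*x*y) := by group
  _ = y*x := by rw [h]
end helpers

/-- a⁻¹ca = c⁻¹ -/
lemma ca : 𝕒⁻¹ * 𝕔 * 𝕒 = 𝕔⁻¹ := by
  calc 𝕒⁻¹ * 𝕔 * 𝕒 = 𝕔 * (𝕔⁻¹ * 𝕒⁻¹ * 𝕔 * 𝕒 * 𝕔^2) * 𝕔⁻¹ * 𝕔⁻¹ := by group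
  _ = 𝕔⁻¹ := by rw [r5]; group

lemma cb : 𝕓⁻¹ * 𝕔 * 𝕓 = 𝕔⁻¹ := by
  calc 𝕓⁻¹ * 𝕔 * 𝕓 = 𝕔 * (𝕔⁻¹ * 𝕓⁻¹ * 𝕔 * 𝕓 * 𝕔^2) * 𝕔⁻¹ * 𝕔⁻¹ := by group
  _ = 𝕔⁻¹ := by rw [r6]; group

/-- ba = ab c -/
lemma swap_ba : 𝕓 * 𝕒 = 𝕒 * 𝕓 * 𝕔 := by
  calc 𝕓 * 𝕒 = 𝕒 * 𝕓 * (𝕓⁻¹ * 𝕒⁻¹ * 𝕓 * 𝕒) := by group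
  _ = 𝕒 * 𝕓 * 𝕔 := by rw [r4]

/-- a⁻¹ b a = b c -/
lemma ab_conj : 𝕒⁻¹ * 𝕓 * 𝕒 = 𝕓 * 𝕔 := by
  calc 𝕒⁻¹ * 𝕓 * 𝕒 = 𝕒⁻¹ * (𝕒 * 𝕓 * 𝕔) := by rw [← swap_ba]; group
  _ = 𝕓 * 𝕔 := by group

/-- b⁻¹ a b = a c⁻¹ -/
lemma ba_conj : 𝕓⁻¹ * 𝕒 * 𝕓 = 𝕒 * 𝕔⁻¹ := by
  calc 𝕓⁻¹ * 𝕒 * 𝕓 = 𝕒 * (𝕓⁻¹ * 𝕒⁻¹ * 𝕓 * 𝕒)⁻¹ := by group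
  _ = 𝕒 * 𝕔⁻¹ := by rw [r4]

lemma a2_conj_a : 𝕒⁻¹ * 𝕒^2 * 𝕒 = 𝕒^2 := by group

lemma c_conj_a2 : (𝕒^2)⁻¹ * 𝕔 * 𝕒^2 = 𝕔 := by
  have h := conjMul (x := 𝕒) (y := 𝕒) ca (conjInv ca)
  rw [inv_inv] at h
  rw [pow_two]; exact h

lemma c_conj_b2 : (𝕓^2)⁻¹ * 𝕔 * 𝕓^2 = 𝕔 := by
  have h := conjMul (x := 𝕓) (y := 𝕓) cb (conjInv cb)
  rw [inv_inv] at h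
  rw [pow_two]; exact h

lemma c_conj_ab : (𝕒*𝕓)⁻¹ * 𝕔 * (𝕒*𝕓) = 𝕔 := by
  have h := conjMul (x := 𝕒) (y := 𝕓) ca (conjInv cb)
  rw [inv_inv] at h
  exact h

lemma comm_c_a2 : 𝕔 * 𝕒^2 = 𝕒^2 * 𝕔 := comm_of_conj c_conj_a2
lemma comm_c_b2 : 𝕔 * 𝕓^2 = 𝕓^2 * 𝕔 := comm_of_conj c_conj_b2
lemma comm_c_ab : 𝕔 * (𝕒*𝕓) = (𝕒*𝕓) * 𝕔 := comm_of_conj c_conj_ab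

lemma a2_conj_b : 𝕓⁻¹ * 𝕒^2 * 𝕓 = 𝕒^2 := by
  rw [pow_two]
  calc 𝕓⁻¹ * (𝕒*𝕒) * 𝕓 = (𝕓⁻¹ * 𝕒 * 𝕓) * (𝕓⁻¹ * 𝕒 * 𝕓) := by group
  _ = (𝕒 * 𝕔⁻¹) * (𝕒 * 𝕔⁻¹) := by rw [ba_conj]
  _ = 𝕒 * (𝕒 * (𝕒⁻¹ * 𝕔⁻¹ * 𝕒) * 𝕔⁻¹) := by group
  _ = 𝕒 * (𝕒 * (𝕒⁻¹ * 𝕔 * 𝕒)⁻¹ * 𝕔⁻¹) := by group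
  _ = 𝕒 * (𝕒 * 𝕔⁻¹⁻¹ * 𝕔⁻¹) := by rw [ca]
  _ = 𝕒 * 𝕒 := by group

lemma b2_conj_a : 𝕒⁻¹ * 𝕓^2 * 𝕒 = 𝕓^2 := by
  rw [pow_two]
  calc 𝕒⁻¹ * (𝕓*𝕓) * 𝕒 = (𝕒⁻¹ * 𝕓 * 𝕒) * (𝕒⁻¹ * 𝕓 * 𝕒) := by group
  _ = (𝕓 * 𝕔) * (𝕓 * 𝕔) := by rw [ab_conj]
  _ = 𝕓 * (𝕓 * (𝕓⁻¹ * 𝕔 * 𝕓) * 𝕔) := by group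
  _ = 𝕓 * (𝕓 * 𝕔⁻¹ * 𝕔) := by rw [cb]
  _ = 𝕓 * 𝕓 := by group

lemma comm_b_a2 : 𝕒^2 * 𝕓 = 𝕓 * 𝕒^2 := comm_of_conj a2_conj_b
lemma comm_a_b2 : 𝕓^2 * 𝕒 = 𝕒 * 𝕓^2 := comm_of_conj b2_conj_a

/-- (ab)² = a²b²c⁻¹ -/
lemma sq_ab : (𝕒*𝕓)^2 = 𝕒^2 * 𝕓^2 * 𝕔⁻¹ := by
  rw [pow_two, pow_two, pow_two]
  calc (𝕒*𝕓)*(𝕒*𝕓) = 𝕒 * (𝕓 * 𝕒) * 𝕓 := by group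
  _ = 𝕒 * (𝕒 * 𝕓 * 𝕔) * 𝕓 := by rw [swap_ba]
  _ = 𝕒 * 𝕒 * 𝕓 * (𝕓 * (𝕓⁻¹ * 𝕔 * 𝕓)) := by group
  _ = 𝕒 * 𝕒 * 𝕓 * (𝕓 * 𝕔⁻¹) := by rw [cb]
  _ = 𝕒*𝕒 * (𝕓*𝕓) * 𝕔⁻¹ := by group


/-! ### Concrete homomorphisms -/

def fA (n m : ℕ) : Fin 3 → Multiplicative (ZMod (2^n) × ZMod (2^m)) :=
  ![Multiplicative.ofAdd (1,0), Multiplicative.ofAdd (1,1), 1]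

lemma fA_rels : ∀ r ∈ relsH2 n m ℓ, FreeGroup.lift (fA n m) r = 1 := by
  intro r hr
  simp only [relsH2, Set.mem_insert_iff, Set.mem_singleton_iff] at hr
  rcases hr with rfl|rfl|rfl|rfl|rfl|rfl <;>
    simp only [map_pow, map_mul, map_inv, FreeGroup.lift_apply_of, fA, Matrix.cons_val_zero,
      Matrix.cons_val_one, Matrix.head_cons, Matrix.cons_val_two, Matrix.tail_cons] <;>
    simp only [← ofAdd_nsmul, ← ofAdd_neg, ← ofAdd_add, inv_one, one_pow, mul_one, one_mul] <;>
    rw [show (1 : Multiplicative (ZMod (2^n) × ZMod (2^m))) = Multiplicative.ofAdd 0 from rfl] <;>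
    congr 1 <;>
    simp [Prod.ext_iff, smul_zero, nsmul_eq_mul, ← Nat.cast_pow, ZMod.natCast_self] <;>
    exact_mod_cast ZMod.natCast_self (2^m)

def φA : H2 n m ℓ →* Multiplicative (ZMod (2^n) × ZMod (2^m)) :=
  PresentedGroup.toGroup fA_rels

lemma a_pow_ne_one (hn : 1 ≤ n) : (𝕒 ^ (2^(n-1)) : H2 n m ℓ) ≠ 1 := by
  intro h
  have := congrArg (φA (n := n) (m := m) (ℓ := ℓ)) h
  rw [map_pow, map_one] at this
  rw [show φA (n := n) (m := m) (ℓ := ℓ) 𝕒 = Multiplicative.ofAdd (1,0) from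
    PresentedGroup.toGroup.of fA_rels] at this
  rw [← ofAdd_nsmul] at this
  have h2 : ((2^(n-1) : ℕ) • ((1 : ZMod (2^n)), (0 : ZMod (2^m)))) = 0 := this
  rw [Prod.ext_iff] at h2
  have h3 : ((2^(n-1) : ℕ) : ZMod (2^n)) = 0 := by
    have h4 := h2.1
    rw [Prod.smul_fst, nsmul_eq_mul, mul_one] at h4
    exact_mod_cast h4
  rw [ZMod.natCast_eq_zero_iff] at h3
  have := (Nat.pow_dvd_pow_iff_le_right (by norm_num : 1 < 2)).1 h3
  omega


lemma r_pow {N : ℕ} (i : ZMod N) (k : ℕ) :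
    (DihedralGroup.r i)^k = DihedralGroup.r ((k : ZMod N) * i) := by
  induction k with
  | zero => rw [pow_zero, Nat.cast_zero, zero_mul]; rfl
  | succ k ih =>
      rw [pow_succ, ih, DihedralGroup.r_mul_r]
      congr 1
      push_cast
      ring

def fD (ℓ : ℕ) : Fin 3 → DihedralGroup (2^(ℓ+1)) :=
  ![DihedralGroup.sr 0, DihedralGroup.sr 1, DihedralGroup.r (-2)]

lemma sr_pow_even {N : ℕ} (i : ZMod N) (k : ℕ) : (DihedralGroup.sr i)^(2*k) = 1 := by
  rw [pow_mul]
  rw [show (DihedralGroup.sr i)^2 = 1 from by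
    rw [pow_two, DihedralGroup.sr_mul_sr, sub_self, DihedralGroup.one_def]]
  exact one_pow _

lemma inv_sr {N : ℕ} (i : ZMod N) : (DihedralGroup.sr i)⁻¹ = DihedralGroup.sr i :=
  inv_eq_of_mul_eq_one_right (DihedralGroup.sr_mul_self i)

lemma inv_r {N : ℕ} (i : ZMod N) : (DihedralGroup.r i)⁻¹ = DihedralGroup.r (-i) :=
  inv_eq_of_mul_eq_one_right (by rw [DihedralGroup.r_mul_r, add_neg_cancel, DihedralGroup.one_def])

lemma fD_rels (hn : 1 ≤ n) (hm : 1 ≤ m) :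
    ∀ r ∈ relsH2 n m ℓ, FreeGroup.lift (fD ℓ) r = 1 := by
  intro r hr
  simp only [relsH2, Set.mem_insert_iff, Set.mem_singleton_iff] at hr
  rcases hr with rfl|rfl|rfl|rfl|rfl|rfl <;>
    simp only [map_pow, map_mul, map_inv, FreeGroup.lift_apply_of, fD, Matrix.cons_val_zero,
      Matrix.cons_val_one, Matrix.head_cons, Matrix.cons_val_two, Matrix.tail_cons]
  · rw [show 2^n = 2*2^(n-1) from by rw [← pow_succ']; congr 1; omega]
    exact sr_pow_even _ _
  · rw [show 2^m = 2*2^(m-1) from by rw [← pow_succ']; congr 1; omega]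
    rw [sr_pow_even, sr_pow_even, inv_one, mul_one]
  · rw [r_pow]
    rw [show ((((2:ℕ)^ℓ : ℕ) : ZMod (2^(ℓ+1))) * (-2)) = -(((2^(ℓ+1) : ℕ) : ZMod (2^(ℓ+1)))) from by
      push_cast; ring]
    rw [ZMod.natCast_self, neg_zero, DihedralGroup.one_def]
  all_goals
    simp only [pow_two, inv_sr, inv_r, DihedralGroup.r_mul_r, DihedralGroup.r_mul_sr,
      DihedralGroup.sr_mul_r, DihedralGroup.sr_mul_sr, DihedralGroup.one_def]
  all_goals (congr 1; ring)


def φD (hn : 1 ≤ n) (hm : 1 ≤ m) : H2 n m ℓ →* DihedralGroup (2^(ℓ+1)) :=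
  PresentedGroup.toGroup (fD_rels hn hm)

lemma c_sq_ne_one (hn : 1 ≤ n) (hm : 1 ≤ m) (hℓ : 2 ≤ ℓ) : (𝕔^2 : H2 n m ℓ) ≠ 1 := by
  intro h
  have h1 := congrArg (φD (n := n) (m := m) (ℓ := ℓ) hn hm) h
  rw [map_pow, map_one] at h1
  rw [show φD (n := n) (m := m) (ℓ := ℓ) hn hm 𝕔 = DihedralGroup.r (-2) from
    PresentedGroup.toGroup.of (fD_rels hn hm)] at h1
  rw [pow_two, DihedralGroup.r_mul_r, DihedralGroup.one_def] at h1
  have h2 : ((-2) + (-2) : ZMod (2^(ℓ+1))) = 0 := DihedralGroup.r.inj h1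
  have h3 : (((4:ℕ)) : ZMod (2^(ℓ+1))) = 0 := by
    rw [← neg_eq_zero]; push_cast; linear_combination h2
  rw [ZMod.natCast_eq_zero_iff] at h3
  have h4 : 2^(ℓ+1) ≤ 4 := Nat.le_of_dvd (by norm_num) h3
  have h5 : 2^3 ≤ 2^(ℓ+1) := Nat.pow_le_pow_right (by norm_num) (by omega)
  omega

lemma c_ne_cinv (hn : 1 ≤ n) (hm : 1 ≤ m) (hℓ : 2 ≤ ℓ) : (𝕔 : H2 n m ℓ) ≠ 𝕔⁻¹ := by
  intro h
  apply c_sq_ne_one hn hm hℓ (n := n) (m := m)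
  rw [pow_two]
  nth_rewrite 2 [h]
  exact mul_inv_cancel _


/-! ### more conjugation lemmas -/

section helpers2
variable {G : Type*} [Group G]
lemma conj_of_comm {x y : G} (h : y*x = x*y) : y*x*y⁻¹ = x := by rw [h]; group
lemma conj_of_comm' {x y : G} (h : y*x = x*y) : y⁻¹*x*y = x := by
  calc y⁻¹*x*y = y⁻¹*(x*y) := by group
  _ = y⁻¹*(y*x) := by rw [← h]
  _ = x := by group

lemma conj_closure_mem {S : Set G} {y : G}
    (h : ∀ s ∈ S, y * s * y⁻¹ ∈ Subgroup.closure S) :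
    ∀ x ∈ Subgroup.closure S, y * x * y⁻¹ ∈ Subgroup.closure S := by
  intro x hx
  induction hx using Subgroup.closure_induction with
  | mem z hz => exact h z hz
  | one => simpa using one_mem _
  | mul z w hz hw pz pw =>
      have e : y*(z*w)*y⁻¹ = (y*z*y⁻¹)*(y*w*y⁻¹) := by group
      rw [e]; exact mul_mem pz pw
  | inv z hz pz =>
      have e : y*z⁻¹*y⁻¹ = (y*z*y⁻¹)⁻¹ := by group
      rw [e]; exact inv_mem pz

lemma mem_normalizer_of_conj {S : Set G} {y : G}
    (h1 : ∀ s ∈ S, y * s * y⁻¹ ∈ Subgroup.closure S)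
    (h2 : ∀ s ∈ S, y⁻¹ * s * y ∈ Subgroup.closure S) :
    y ∈ Subgroup.normalizer (Subgroup.closure S : Set G) := by
  rw [Subgroup.mem_normalizer_iff]
  intro x
  constructor
  · intro hx; exact conj_closure_mem h1 x hx
  · intro hx
    have h2' : ∀ s ∈ S, y⁻¹ * s * (y⁻¹)⁻¹ ∈ Subgroup.closure S := by
      intro s hs; rw [inv_inv]; exact h2 s hs
    have := conj_closure_mem h2' _ hx
    have e : y⁻¹ * (y*x*y⁻¹) * (y⁻¹)⁻¹ = x := by group
    rwa [e] at this
end helpers2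

lemma ca' : 𝕒 * 𝕔 * 𝕒⁻¹ = 𝕔⁻¹ := by
  have h := conj_flip (d := 𝕔⁻¹) ca
  rw [inv_inv] at h
  calc 𝕒 * 𝕔 * 𝕒⁻¹ = (𝕒 * 𝕔⁻¹ * 𝕒⁻¹)⁻¹ := by group
  _ = 𝕔⁻¹ := by rw [h]

lemma cb' : 𝕓 * 𝕔 * 𝕓⁻¹ = 𝕔⁻¹ := by
  have h := conj_flip (d := 𝕔⁻¹) cb
  rw [inv_inv] at h
  calc 𝕓 * 𝕔 * 𝕓⁻¹ = (𝕓 * 𝕔⁻¹ * 𝕓⁻¹)⁻¹ := by group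
  _ = 𝕔⁻¹ := by rw [h]

lemma ab_conj' : 𝕒 * 𝕓 * 𝕒⁻¹ = 𝕓 * 𝕔 := by
  have h1 : 𝕒 * 𝕔⁻¹ * 𝕒⁻¹ = 𝕔 := by
    have := conj_flip (d := 𝕔⁻¹) ca; rwa [inv_inv] at this
  calc 𝕒*𝕓*𝕒⁻¹ = (𝕒*𝕓*𝕔)*(𝕔⁻¹*𝕒⁻¹) := by group
  _ = (𝕓*𝕒)*(𝕔⁻¹*𝕒⁻¹) := by rw [← swap_ba]
  _ = 𝕓*(𝕒*𝕔⁻¹*𝕒⁻¹) := by group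
  _ = 𝕓*𝕔 := by rw [h1]

lemma sq_comm {G : Type*} [Group G] (x : G) : x*x^2 = x^2*x := by rw [pow_two]; group

/-- the subgroup T = ⟨a², ab, b², c⟩ -/
abbrev SS (n m ℓ : ℕ) : Set (H2 n m ℓ) :=
  {(PresentedGroup.of 0 : H2 n m ℓ)^2, PresentedGroup.of 0 * PresentedGroup.of 1,
   (PresentedGroup.of 1 : H2 n m ℓ)^2, PresentedGroup.of 2}

abbrev TT (n m ℓ : ℕ) : Subgroup (H2 n m ℓ) := Subgroup.closure (SS n m ℓ)

lemma a2_mem : 𝕒^2 ∈ TT n m ℓ := Subgroup.subset_closure (by left; rfl)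
lemma ab_mem : 𝕒*𝕓 ∈ TT n m ℓ := Subgroup.subset_closure (by right; left; rfl)
lemma b2_mem : 𝕓^2 ∈ TT n m ℓ := Subgroup.subset_closure (by right; right; left; rfl)
lemma c_mem : 𝕔 ∈ TT n m ℓ := Subgroup.subset_closure (by right; right; right; rfl)

lemma top_eq : Subgroup.closure ({𝕒, 𝕓, 𝕔} : Set (H2 n m ℓ)) = ⊤ := by
  have h : (Set.range (PresentedGroup.of : Fin 3 → H2 n m ℓ)) = {𝕒, 𝕓, 𝕔} := by
    ext x
    simp only [Set.mem_range, Set.mem_insert_iff, Set.mem_singleton_iff]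
    constructor
    · rintro ⟨i, rfl⟩
      fin_cases i
      · exact Or.inl rfl
      · exact Or.inr (Or.inl rfl)
      · exact Or.inr (Or.inr rfl)
    · rintro (rfl|rfl|rfl)
      exacts [⟨0, rfl⟩, ⟨1, rfl⟩, ⟨2, rfl⟩]
  rw [← h, PresentedGroup.closure_range_of]

lemma mem_top' (x : H2 n m ℓ) : x ∈ Subgroup.closure ({𝕒, 𝕓, 𝕔} : Set (H2 n m ℓ)) := by
  rw [top_eq]; trivial

lemma TT_normal : (TT n m ℓ).Normal := by
  rw [← Subgroup.normalizer_eq_top_iff]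
  rw [eq_top_iff, ← top_eq]
  rw [Subgroup.closure_le]
  rintro x (rfl|rfl|rfl)
  · -- x = a
    apply mem_normalizer_of_conj <;> rintro s (rfl|rfl|rfl|rfl)
    · rw [conj_of_comm (sq_comm 𝕒)]; exact a2_mem
    · have e2 : 𝕒*(𝕒*𝕓)*𝕒⁻¹ = 𝕒*(𝕒*𝕓*𝕒⁻¹) := by group
      rw [e2, ab_conj']
      have e3 : 𝕒*(𝕓*𝕔) = (𝕒*𝕓)*𝕔 := by group
      rw [e3]; exact mul_mem ab_mem c_mem
    · rw [conj_of_comm comm_a_b2.symm]; exact b2_mem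
    · rw [ca']; exact inv_mem c_mem
    · rw [conj_of_comm' (sq_comm 𝕒)]; exact a2_mem
    · have e : 𝕒⁻¹*(𝕒*𝕓)*𝕒 = 𝕓*𝕒 := by group
      rw [e, swap_ba]; exact mul_mem ab_mem c_mem
    · rw [b2_conj_a]; exact b2_mem
    · rw [ca]; exact inv_mem c_mem
  · -- x = b
    apply mem_normalizer_of_conj <;> rintro s (rfl|rfl|rfl|rfl)
    · have h := conj_flip (d := 𝕒^2) a2_conj_b
      rw [inv_inv] at h
      rw [h]; exact a2_mem
    · have e : 𝕓*(𝕒*𝕓)*𝕓⁻¹ = 𝕓*𝕒 := by group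
      rw [e, swap_ba]; exact mul_mem ab_mem c_mem
    · rw [conj_of_comm (sq_comm 𝕓)]; exact b2_mem
    · rw [cb']; exact inv_mem c_mem
    · rw [a2_conj_b]; exact a2_mem
    · have h2 : 𝕓⁻¹ * 𝕔⁻¹ * 𝕓 = 𝕔 := by
        have := conjInv (d := 𝕔⁻¹) cb; rwa [inv_inv] at this
      have e : 𝕓⁻¹*(𝕒*𝕓)*𝕓 = (𝕓⁻¹*𝕒*𝕓)*𝕓 := by group
      rw [e, ba_conj]
      have e2 : (𝕒*𝕔⁻¹)*𝕓 = 𝕒*(𝕓*(𝕓⁻¹*𝕔⁻¹*𝕓)) := by group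
      rw [e2, h2]
      have e3 : 𝕒*(𝕓*𝕔) = (𝕒*𝕓)*𝕔 := by group
      rw [e3]; exact mul_mem ab_mem c_mem
    · rw [conj_of_comm' (sq_comm 𝕓)]; exact b2_mem
    · rw [cb]; exact inv_mem c_mem
  · -- x = c
    apply mem_normalizer_of_conj <;> rintro s (rfl|rfl|rfl|rfl)
    · rw [conj_of_comm comm_c_a2]; exact a2_mem
    · rw [conj_of_comm comm_c_ab]; exact ab_mem
    · rw [conj_of_comm comm_c_b2]; exact b2_mem
    · rw [conj_of_comm rfl]; exact c_mem
    · rw [conj_of_comm' comm_c_a2]; exact a2_mem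
    · rw [conj_of_comm' comm_c_ab]; exact ab_mem
    · rw [conj_of_comm' comm_c_b2]; exact b2_mem
    · rw [conj_of_comm' rfl]; exact c_mem


/-! ### N = ⟨c⟩, normal, contains commutator -/

abbrev NN (n m ℓ : ℕ) : Subgroup (H2 n m ℓ) :=
  Subgroup.closure {(PresentedGroup.of 2 : H2 n m ℓ)}

lemma c_mem_NN : 𝕔 ∈ NN n m ℓ := Subgroup.subset_closure rfl

lemma NN_normal : (NN n m ℓ).Normal := by
  rw [← Subgroup.normalizer_eq_top_iff, eq_top_iff, ← top_eq, Subgroup.closure_le]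
  rintro x (rfl|rfl|rfl) <;> apply mem_normalizer_of_conj <;> rintro s rfl
  · rw [ca']; exact inv_mem c_mem_NN
  · rw [ca]; exact inv_mem c_mem_NN
  · rw [cb']; exact inv_mem c_mem_NN
  · rw [cb]; exact inv_mem c_mem_NN
  · rw [conj_of_comm rfl]; exact c_mem_NN
  · rw [conj_of_comm' rfl]; exact c_mem_NN

open scoped commutatorElement in
lemma commutator_le_NN : commutator (H2 n m ℓ) ≤ NN n m ℓ := by
  letI inst := NN_normal (n := n) (m := m) (ℓ := ℓ)
  set π := QuotientGroup.mk' (NN n m ℓ) with hπ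
  have hπc : π 𝕔 = 1 := (QuotientGroup.eq_one_iff _).2 c_mem_NN
  have hab : Commute (π 𝕒) (π 𝕓) := by
    have h4 : π 𝕓⁻¹ * π 𝕒⁻¹ * π 𝕓 * π 𝕒 = 1 := by
      rw [← map_mul, ← map_mul, ← map_mul, r4, hπc]
    rw [map_inv, map_inv] at h4
    have h5 : ⁅(π 𝕓)⁻¹, (π 𝕒)⁻¹⁆ = 1 := by
      rw [commutatorElement_def, inv_inv, inv_inv]; exact h4
    have h6 := (commutatorElement_eq_one_iff_commute.1 h5).inv_inv
    rw [inv_inv, inv_inv] at h6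
    exact h6.symm
  -- every image commutes with images of generators
  have key : ∀ x : H2 n m ℓ, Commute (π x) (π 𝕒) ∧ Commute (π x) (π 𝕓) := by
    intro x
    have hx := mem_top' x
    induction hx using Subgroup.closure_induction with
    | mem z hz =>
        rcases hz with rfl|rfl|rfl
        · exact ⟨Commute.refl _, hab⟩
        · exact ⟨hab.symm, Commute.refl _⟩
        · rw [hπc]; exact ⟨Commute.one_left _, Commute.one_left _⟩
    | one => rw [map_one]; exact ⟨Commute.one_left _, Commute.one_left _⟩
    | mul z w hz hw pz pw =>
        rw [map_mul]; exact ⟨pz.1.mul_left pw.1, pz.2.mul_left pw.2⟩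
    | inv z hz pz => rw [map_inv]; exact ⟨pz.1.inv_left, pz.2.inv_left⟩
  have key2 : ∀ x y : H2 n m ℓ, Commute (π x) (π y) := by
    intro x y
    have hy := mem_top' y
    induction hy using Subgroup.closure_induction with
    | mem z hz =>
        rcases hz with rfl|rfl|rfl
        · exact (key x).1
        · exact (key x).2
        · rw [hπc]; exact Commute.one_right _
    | one => rw [map_one]; exact Commute.one_right _
    | mul z w hz hw pz pw => rw [map_mul]; exact pz.mul_right pw
    | inv z hz pz => rw [map_inv]; exact pz.inv_right
  rw [_root_.commutator_def, Subgroup.commutator_le]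
  intro g _ h _
  have hone : π ⁅g, h⁆ = 1 := by
    rw [map_commutatorElement]
    exact commutatorElement_eq_one_iff_commute.2 (key2 g h)
  exact (QuotientGroup.eq_one_iff _).1 hone


open scoped commutatorElement in
lemma c_mem_commutator : 𝕔 ∈ commutator (H2 n m ℓ) := by
  have h : (𝕔 : H2 n m ℓ) = ⁅𝕓⁻¹, 𝕒⁻¹⁆ := by
    rw [commutatorElement_def, inv_inv, inv_inv, ← r4]
  rw [h, _root_.commutator_def]
  exact Subgroup.commutator_mem_commutator (Subgroup.mem_top _) (Subgroup.mem_top _)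

/-- The key dichotomy. -/
lemma key_P (x : H2 n m ℓ) :
    (x ∈ TT n m ℓ ∧ x⁻¹ * 𝕔 * x = 𝕔) ∨ ((𝕒⁻¹ * x ∈ TT n m ℓ) ∧ x⁻¹ * 𝕔 * x = 𝕔⁻¹) := by
  have hno : (TT n m ℓ).Normal := TT_normal
  have hx := mem_top' x
  induction hx using Subgroup.closure_induction with
  | mem z hz =>
      rcases hz with rfl|rfl|rfl
      · right
        constructor
        · rw [inv_mul_cancel]; exact one_mem _
        · exact ca
      · right
        constructor
        · have e : 𝕒⁻¹*𝕓 = (𝕒^2)⁻¹*(𝕒*𝕓) := by rw [pow_two]; group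
          rw [e]; exact mul_mem (inv_mem a2_mem) ab_mem
        · exact cb
      · exact Or.inl ⟨c_mem, by group⟩
  | one => exact Or.inl ⟨one_mem _, by group⟩
  | mul z w hz hw pz pw =>
      rcases pz with ⟨hz1, hz2⟩|⟨hz1, hz2⟩ <;> rcases pw with ⟨hw1, hw2⟩|⟨hw1, hw2⟩
      · exact Or.inl ⟨mul_mem hz1 hw1, conjMul hz2 hw2⟩
      · right
        constructor
        · have e : 𝕒⁻¹*(z*w) = (𝕒⁻¹*z*𝕒⁻¹⁻¹)*(𝕒⁻¹*w) := by group
          rw [e]; exact mul_mem (hno.conj_mem z hz1 𝕒⁻¹) hw1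
        · exact conjMul hz2 hw2
      · right
        constructor
        · have e : 𝕒⁻¹*(z*w) = (𝕒⁻¹*z)*w := by group
          rw [e]; exact mul_mem hz1 hw1
        · exact conjMul hz2 (conjInv hw2)
      · left
        constructor
        · have e : z*w = 𝕒^2*(𝕒⁻¹*(𝕒⁻¹*z)*𝕒⁻¹⁻¹)*(𝕒⁻¹*w) := by rw [pow_two]; group
          rw [e]; exact mul_mem (mul_mem a2_mem (hno.conj_mem _ hz1 𝕒⁻¹)) hw1
        · have h := conjMul hz2 (conjInv hw2)
          rwa [inv_inv] at h
  | inv z hz pz =>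
      rcases pz with ⟨hz1, hz2⟩|⟨hz1, hz2⟩
      · exact Or.inl ⟨inv_mem hz1, conj_flip hz2⟩
      · right
        constructor
        · have e : 𝕒⁻¹*z⁻¹ = (𝕒⁻¹*(𝕒⁻¹*z)⁻¹*𝕒⁻¹⁻¹)*(𝕒^2)⁻¹ := by rw [pow_two]; group
          rw [e]
          exact mul_mem (hno.conj_mem _ (inv_mem hz1) 𝕒⁻¹) (inv_mem a2_mem)
        · have e : z⁻¹⁻¹ * 𝕔 * z⁻¹ = (z⁻¹⁻¹ * 𝕔⁻¹ * z⁻¹)⁻¹ := by group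
          rw [e, conj_flip hz2]

lemma c_comm_SS : ∀ s ∈ SS n m ℓ, Commute 𝕔 s := by
  rintro s (rfl|rfl|rfl|rfl)
  exacts [comm_c_a2, comm_c_ab, comm_c_b2, Commute.refl _]

lemma TT_le_centralizer :
    TT n m ℓ ≤ Subgroup.centralizer ((commutator (H2 n m ℓ) : Subgroup (H2 n m ℓ)) : Set (H2 n m ℓ)) := by
  rw [Subgroup.closure_le]
  intro s hs
  rw [SetLike.mem_coe, Subgroup.mem_centralizer_iff]
  intro g hg
  have hgN : g ∈ NN n m ℓ := commutator_le_NN hg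
  clear hg
  induction hgN using Subgroup.closure_induction with
  | mem z hz =>
      rcases hz with rfl
      exact c_comm_SS s hs
  | one => rw [one_mul, mul_one]
  | mul z w hz hw pz pw => exact (Commute.mul_left pz pw : _)
  | inv z hz pz => exact (Commute.inv_left pz : _)

lemma centralizer_eq (hn : 1 ≤ n) (hm : 1 ≤ m) (hℓ : 2 ≤ ℓ) :
    Subgroup.centralizer ((commutator (H2 n m ℓ) : Subgroup (H2 n m ℓ)) : Set (H2 n m ℓ)) =
      TT n m ℓ := by
  refine le_antisymm ?_ TT_le_centralizer
  intro x hx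
  have hcx : 𝕔 * x = x * 𝕔 :=
    Subgroup.mem_centralizer_iff.1 hx 𝕔 c_mem_commutator
  rcases key_P x with ⟨h1, _⟩|⟨_, h2⟩
  · exact h1
  · exfalso
    apply c_ne_cinv hn hm hℓ (n := n) (m := m)
    rw [← h2, mul_assoc, hcx, ← mul_assoc, inv_mul_cancel, one_mul]

/-- Pairwise commutation on T. -/
lemma TT_comm : ∀ u ∈ TT n m ℓ, ∀ v ∈ TT n m ℓ, Commute u v := by
  have hC1 : Commute (𝕒^2) 𝕓 := comm_b_a2
  have hC2 : Commute (𝕓^2) 𝕒 := comm_a_b2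
  have Ca2ab : Commute (𝕒^2) (𝕒*𝕓) :=
    Commute.mul_right ((Commute.refl 𝕒).pow_left 2) hC1
  have Ca2b2 : Commute (𝕒^2) (𝕓^2) := hC1.pow_right 2
  have Cabb2 : Commute (𝕒*𝕓) (𝕓^2) :=
    Commute.mul_left hC2.symm ((Commute.refl 𝕓).pow_right 2)
  intro u hu v hv
  refine Subgroup.closure_induction₂ (p := fun x y _ _ => Commute x y) ?_ ?_ ?_ ?_ ?_ ?_ ?_ hu hv
  · rintro x y (rfl|rfl|rfl|rfl) (rfl|rfl|rfl|rfl) <;>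
      first
        | exact Commute.refl _
        | exact Ca2ab | exact Ca2ab.symm
        | exact Ca2b2 | exact Ca2b2.symm
        | exact Cabb2 | exact Cabb2.symm
        | exact (show Commute 𝕔 (𝕒^2) from comm_c_a2).symm | exact (show Commute 𝕔 (𝕒^2) from comm_c_a2)
        | exact (show Commute 𝕔 (𝕒*𝕓) from comm_c_ab).symm | exact (show Commute 𝕔 (𝕒*𝕓) from comm_c_ab)
        | exact (show Commute 𝕔 (𝕓^2) from comm_c_b2).symm | exact (show Commute 𝕔 (𝕓^2) from comm_c_b2)
  · exact fun x _ => Commute.one_left x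
  · exact fun x _ => Commute.one_right x
  · exact fun x y z _ _ _ h1 h2 => h1.mul_left h2
  · exact fun y z x _ _ _ h1 h2 => h1.mul_right h2
  · exact fun x y _ _ h => h.inv_left
  · exact fun x y _ _ h => h.inv_right


lemma pow2_split {i j : ℕ} (h : i ≤ j) : (2:ℕ)^j = 2^i * 2^(j-i) := by
  rw [← pow_add]; congr 1; omega

lemma b_pow {k : ℕ} (hk : m ≤ k) : (𝕓 : H2 n m ℓ)^(2^k) = 𝕒^(2^k) := by
  rw [pow2_split hk, pow_mul, pow_mul, r2]

lemma c_pow {k : ℕ} (hk : ℓ ≤ k) : (𝕔 : H2 n m ℓ)^(2^k) = 1 := by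
  rw [pow2_split hk, pow_mul, r3, one_pow]

lemma a_pow {k : ℕ} (hk : n ≤ k) : (𝕒 : H2 n m ℓ)^(2^k) = 1 := by
  rw [pow2_split hk, pow_mul, r1, one_pow]

lemma pow_TT (hℓm : ℓ < m) (hmn : m < n) :
    ∀ x ∈ TT n m ℓ, x^(2^(n-1)) = 1 := by
  have h2n : 2*2^(n-1) = 2^n := by rw [← pow_succ']; congr 1; omega
  intro x hx
  induction hx using Subgroup.closure_induction with
  | mem z hz =>
      rcases hz with rfl|rfl|rfl|rfl
      · rw [← pow_mul, h2n, r1]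
      · rw [show (2:ℕ)^(n-1) = 2*2^(n-2) from by rw [← pow_succ']; congr 1; omega,
          pow_mul, sq_ab]
        have hC1 : Commute (𝕒^2*𝕓^2) (𝕔⁻¹) :=
          (Commute.mul_left (show Commute (𝕒^2) 𝕔 from comm_c_a2.symm)
            (show Commute (𝕓^2) 𝕔 from comm_c_b2.symm)).inv_right
        have hC2 : Commute ((𝕒:H2 n m ℓ)^2) (𝕓^2) :=
          (show Commute (𝕒^2) 𝕓 from comm_b_a2).pow_right 2
        rw [hC1.mul_pow, hC2.mul_pow, ← pow_mul, ← pow_mul, inv_pow]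
        rw [show 2*2^(n-2) = 2^(n-1) from by rw [← pow_succ']; congr 1; omega]
        rw [b_pow (show m ≤ n-1 from by omega), c_pow (show ℓ ≤ n-2 from by omega),
          inv_one, mul_one, ← pow_add]
        rw [show 2^(n-1)+2^(n-1) = 2^n from by rw [← two_mul, ← pow_succ']; congr 1; omega]
        exact r1
      · rw [← pow_mul, h2n, b_pow (show m ≤ n from by omega), r1]
      · exact c_pow (by omega)
  | one => exact one_pow _
  | mul z w hz hw pz pw =>
      rw [(TT_comm z hz w hw).mul_pow, pz, pw, one_mul]
  | inv z hz pz => rw [inv_pow, pz, inv_one]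

lemma orderOf_a2 (hℓ2 : 2 ≤ ℓ) (hℓm : ℓ < m) (hmn : m < n) :
    orderOf ((𝕒 : H2 n m ℓ)^2) = 2^(n-1) := by
  have h1 : ¬ ((𝕒 : H2 n m ℓ)^2)^(2^(n-2)) = 1 := by
    rw [← pow_mul, show 2*2^(n-2) = 2^(n-1) from by rw [← pow_succ']; congr 1; omega]
    exact a_pow_ne_one (by omega)
  have h2 : ((𝕒 : H2 n m ℓ)^2)^(2^(n-2+1)) = 1 := by
    rw [← pow_mul, show 2*2^(n-2+1) = 2^n from by rw [← pow_succ']; congr 1; omega, r1]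
  have := orderOf_eq_prime_pow (p := 2) h1 h2
  rw [this]; congr 1; omega

end Stmt4Aux


open Stmt4Aux in
/-- For n > m > ℓ ≥ 2, the centralizer of the derived subgroup of H = G_⚁
equals ⟨a², ab, b², c⟩, is abelian, and has exponent 2^{n-1}. -/
theorem stmt4 (n m ℓ : ℕ) (hℓ : 2 ≤ ℓ) (hmℓ : ℓ < m) (hnm : m < n) :
    Subgroup.centralizer ((commutator (H2 n m ℓ) : Subgroup (H2 n m ℓ)) : Set (H2 n m ℓ)) =
      Subgroup.closure {(PresentedGroup.of 0 : H2 n m ℓ) ^ 2,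
        PresentedGroup.of 0 * PresentedGroup.of 1,
        (PresentedGroup.of 1 : H2 n m ℓ) ^ 2, PresentedGroup.of 2} ∧
    (∀ u ∈ Subgroup.centralizer ((commutator (H2 n m ℓ) : Subgroup (H2 n m ℓ)) : Set (H2 n m ℓ)),
      ∀ v ∈ Subgroup.centralizer ((commutator (H2 n m ℓ) : Subgroup (H2 n m ℓ)) : Set (H2 n m ℓ)),
        u * v = v * u) ∧
    Monoid.exponent
      (Subgroup.centralizer ((commutator (H2 n m ℓ) : Subgroup (H2 n m ℓ)) : Set (H2 n m ℓ))) =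
      2 ^ (n - 1) := by
  have heq := Stmt4Aux.centralizer_eq (n := n) (m := m) (ℓ := ℓ)
    (by omega) (by omega) hℓ
  refine ⟨heq, ?_, ?_⟩
  · intro u hu v hv
    rw [heq] at hu hv
    exact (TT_comm u hu v hv).eq
  · rw [heq]
    apply Nat.dvd_antisymm
    · apply Monoid.exponent_dvd_of_forall_pow_eq_one
      intro g
      apply Subtype.ext
      push_cast
      exact pow_TT hmℓ hnm g.1 g.2
    · rw [← orderOf_a2 (n := n) (m := m) (ℓ := ℓ) hℓ hmℓ hnm]
      have h := orderOf_injective (TT n m ℓ).subtype Subtype.coe_injective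
        ⟨(PresentedGroup.of 0 : H2 n m ℓ)^2, a2_mem⟩
      rw [show (TT n m ℓ).subtype ⟨(PresentedGroup.of 0 : H2 n m ℓ)^2, a2_mem⟩ =
        (PresentedGroup.of 0 : H2 n m ℓ)^2 from rfl] at h
      rw [h]
      exact Monoid.order_dvd_exponent _
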